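/- Let A be an n×n real positive definite matrix, K₁ an m₁×m₁ real positive definite matrix, and B₂ an m₂×n real matrix such that the linear map x ↦ B₂x from ℝⁿ to ℝ^{m₂} is surjective. Then the (n+m₁+m₂)×(n+m₁+m₂) block matrix with block rows [A, 0, −B₂ᵀ], [0, K₁, 0], [B₂, 0, 0] is invertible. -/

import Mathlib

open Matrix

/-- For `A` an `n×n` real positive definite matrix, `K₁` an `m₁×m₁` real
positive definite matrix and `B₂` an `m₂×n` real matrix with `x ↦ B₂ x` surjective, the
block matrix with block rows `[A, 0, −B₂ᵀ]`, `[0, K₁, 0]`, `[B₂, 0, 0]` is invertible. -/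
theorem stmt_10 {n m₁ m₂ : ℕ} (A : Matrix (Fin n) (Fin n) ℝ)
    (K₁ : Matrix (Fin m₁) (Fin m₁) ℝ) (B₂ : Matrix (Fin m₂) (Fin n) ℝ)
    (hA : A.PosDef) (hK : K₁.PosDef) (hB : Function.Surjective B₂.mulVec) :
    IsUnit (Matrix.fromBlocks (Matrix.fromBlocks A 0 0 K₁)
      (Matrix.fromRows (-B₂ᵀ) (0 : Matrix (Fin m₁) (Fin m₂) ℝ))
      (Matrix.fromCols B₂ (0 : Matrix (Fin m₂) (Fin m₁) ℝ))
      (0 : Matrix (Fin m₂) (Fin m₂) ℝ)) := by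
  set M := Matrix.fromBlocks (Matrix.fromBlocks A 0 0 K₁)
      (Matrix.fromRows (-B₂ᵀ) (0 : Matrix (Fin m₁) (Fin m₂) ℝ))
      (Matrix.fromCols B₂ (0 : Matrix (Fin m₂) (Fin m₁) ℝ))
      (0 : Matrix (Fin m₂) (Fin m₂) ℝ) with hM
  rw [← Matrix.mulVec_injective_iff_isUnit,
    show M.mulVec = M.mulVecLin from rfl,
    ← LinearMap.ker_eq_bot, LinearMap.ker_eq_bot']
  intro v hv
  set x : Fin n → ℝ := fun i => v (Sum.inl (Sum.inl i)) with hxdef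
  set u : Fin m₁ → ℝ := fun i => v (Sum.inl (Sum.inr i)) with hudef
  set y : Fin m₂ → ℝ := fun i => v (Sum.inr i) with hydef
  have hvi : v ∘ Sum.inl = Sum.elim x u := by ext (i | i) <;> rfl
  have hvy : v ∘ Sum.inr = y := rfl
  rw [mulVecLin_apply, hM, fromBlocks_mulVec, hvi, hvy, fromBlocks_mulVec,
    fromCols_mulVec_sumElim, fromRows_mulVec] at hv
  have htop := congrFun (congrArg (· ∘ Sum.inl) hv)
  have hbot := congrFun (congrArg (· ∘ Sum.inr) hv)
  have h1 : A *ᵥ x + (-B₂ᵀ) *ᵥ y = 0 := by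
    ext i
    simpa using htop (Sum.inl i)
  have h2 : K₁ *ᵥ u = 0 := by
    ext i
    simpa using htop (Sum.inr i)
  have h3 : B₂ *ᵥ x = 0 := by
    ext i
    simpa using hbot i
  rw [Matrix.neg_mulVec, add_neg_eq_zero] at h1
  -- u = 0
  have hu0 : u = 0 := by
    by_contra h
    have := hK.dotProduct_mulVec_pos (x := u) h
    rw [h2] at this
    simp at this
  -- x = 0
  have hdot : x ⬝ᵥ A *ᵥ x = 0 := by
    rw [h1, dotProduct_mulVec, vecMul_transpose, h3, zero_dotProduct]
  have hx0 : x = 0 := by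
    by_contra h
    have := hA.dotProduct_mulVec_pos (x := x) h
    simp only [star_trivial] at this
    rw [hdot] at this
    simp at this
  -- y = 0
  have hBy : B₂ᵀ *ᵥ y = 0 := by rw [← h1, hx0, Matrix.mulVec_zero]
  have hy0 : y = 0 := by
    obtain ⟨x', hx'⟩ := hB y
    have hyy : y ⬝ᵥ y = 0 := by
      calc y ⬝ᵥ y = (B₂ *ᵥ x') ⬝ᵥ y := by rw [hx']
        _ = (x' ᵥ* B₂ᵀ) ⬝ᵥ y := by rw [vecMul_transpose]
        _ = x' ⬝ᵥ (B₂ᵀ *ᵥ y) := (dotProduct_mulVec _ _ _).symm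
        _ = 0 := by rw [hBy, dotProduct_zero]
    exact dotProduct_self_eq_zero.mp hyy
  funext i
  rcases i with (i | i) | i
  · exact congrFun hx0 i
  · exact congrFun hu0 i
  · exact congrFun hy0 i
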